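/- Let φ : ℝ → ℝ be concave and C², let f : V → ℝ, and let x ∈ V. Assume φ'''(s) ≥ 0 (in the sense that φ'' is monotone nondecreasing) for all s with min_{y∼x} f(y) < s < f(x). Then Δ(φ∘f)(x) ≤ φ'(f(x))·Δf(x) + (P₀/2)·φ''(f(x))·(∇₋f(x))², where ∇₋f(x) = max_{y∼x} (f(y)−f(x))₋/d(x,y) and P₀ = inf_{x∼y} P(x,y)·d(x,y)². -/

import Mathlib

open Finset Real

/-- Markov chain Laplacian `Δf(x) = ∑_y P(x,y)(f(y)-f(x))`. -/
noncomputable def lap {V : Type*} [Fintype V] (P : V → V → ℝ) (f : V → ℝ) (x : V) : ℝ :=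
  ∑ y, P x y * (f y - f x)

/-- 1-Lipschitz functions with respect to the distance `d`. -/
def Lip1 {V : Type*} (d : V → V → ℝ) (f : V → ℝ) : Prop :=
  ∀ u v, |f u - f v| ≤ d u v

/-- `P₀ = inf_{x∼y} P(x,y) d(x,y)²`, the infimum over edges. -/
noncomputable def P0 {V : Type*} (P d : V → V → ℝ) : ℝ :=
  sInf {c | ∃ x y, x ≠ y ∧ 0 < P x y ∧ c = P x y * d x y ^ 2}

/-- Non-negative Ollivier curvature: for every edge `x∼y`,
`κ(x,y) = inf{(Δf(x)-Δf(y))/d(x,y) : f ∈ Lip(1), f(y)-f(x)=d(x,y)} ≥ 0`. -/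
def NonnegOllivier {V : Type*} [Fintype V] (P d : V → V → ℝ) : Prop :=
  ∀ x y, 0 < P x y → x ≠ y → ∀ f : V → ℝ, Lip1 d f → f y - f x = d x y →
    lap P f y ≤ lap P f x

/-- `d` is a path metric adapted to the Markov kernel `P`: a metric, positive on distinct
points, and every distance is realized by the length of a path along edges of `P`. -/
def IsPathDist {V : Type*} (P d : V → V → ℝ) : Prop :=
  (∀ x, d x x = 0) ∧ (∀ x y, d x y = d y x) ∧ (∀ x y z, d x z ≤ d x y + d y z) ∧
  (∀ x y, x ≠ y → 0 < d x y) ∧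
  (∀ x y : V, ∃ (n : ℕ) (c : ℕ → V), c 0 = x ∧ c n = y ∧
    (∀ i < n, 0 < P (c i) (c (i + 1))) ∧
    (∑ i ∈ Finset.range n, d (c i) (c (i + 1))) = d x y)

/-- Measure of a set of vertices. -/
noncomputable def measSet {V : Type*} [Fintype V] (m : V → ℝ) (A : Set V) : ℝ :=
  ∑ x, A.indicator m x

/-- Boundary measure `|∂W| = ∑_{x∈W, y∉W} m(x) P(x,y) d(x,y)`. -/
noncomputable def bdry {V : Type*} [Fintype V] (P d : V → V → ℝ) (m : V → ℝ)
    (W : Set V) : ℝ :=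
  ∑ x, ∑ y, W.indicator (fun _ => (1 : ℝ)) x * (Wᶜ).indicator (fun _ => (1 : ℝ)) y *
    (m x * P x y * d x y)

/-- Distance between two sets of vertices. -/
noncomputable def setDist {V : Type*} (d : V → V → ℝ) (A B : Set V) : ℝ :=
  sInf {c | ∃ a ∈ A, ∃ b ∈ B, c = d a b}

/-- Closure of a set: the set together with its outer vertex boundary. -/
def clSet {V : Type*} (P : V → V → ℝ) (B : Set V) : Set V :=
  B ∪ {x | ∃ b ∈ B, 0 < P x b}

/-- Observable diameter at level `ε`. -/
noncomputable def diamObs {V : Type*} [Fintype V] (P d : V → V → ℝ) (m : V → ℝ)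
    (ε : ℝ) : ℝ :=
  sSup {c | ∃ A B : Set V, ε ≤ measSet m A ∧ ε ≤ measSet m (clSet P B) ∧ c = setDist d A B}

/-- Diameter of a set of vertices (with respect to the global distance). -/
noncomputable def diamSet {V : Type*} (d : V → V → ℝ) (S : Set V) : ℝ :=
  sSup {c | ∃ x ∈ S, ∃ y ∈ S, c = d x y}

open Classical in
/-- Negative gradient `∇₋f(x) = max_{y∼x} (f(x)-f(y))₊ / d(x,y)`. -/
noncomputable def nablaMinus {V : Type*} [Fintype V] (P d : V → V → ℝ) (f : V → ℝ)
    (x : V) : ℝ :=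
  ⨆ y : V, if 0 < P x y ∧ x ≠ y then max (f x - f y) 0 / d x y else 0

/-- Logarithmic mean. -/
noncomputable def logMean (s t : ℝ) : ℝ :=
  if s = t then s else (s - t) / (Real.log s - Real.log t)

/-- Smallest Dirichlet eigenvalue of `-Δ` on `W` (zero boundary conditions on `Wᶜ`). -/
noncomputable def lamD {V : Type*} [Fintype V] (P : V → V → ℝ) (m : V → ℝ)
    (W : Set V) : ℝ :=
  sInf {e | ∃ g : V → ℝ, (∑ x, g x ^ 2 * m x) = 1 ∧ (∀ x ∉ W, g x = 0) ∧
    e = ∑ x, (-(lap P g x)) * g x * m x}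

section Aux

variable {φ φ' φ'' : ℝ → ℝ}

/-- Tangent line inequality for concave differentiable functions. -/
lemma aux_tangent_le (hconc : ConcaveOn ℝ Set.univ φ)
    (hder1 : ∀ s, HasDerivAt φ (φ' s) s) (s t : ℝ) :
    φ t ≤ φ s + φ' s * (t - s) := by
  rcases lt_trichotomy t s with h | h | h
  · have := hconc.le_slope_of_hasDerivAt (Set.mem_univ t) (Set.mem_univ s) h (hder1 s)
    rw [slope_def_field, le_div_iff₀ (by linarith)] at this
    nlinarith
  · simp [h]
  · have := hconc.slope_le_of_hasDerivAt (Set.mem_univ s) (Set.mem_univ t) h (hder1 s)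
    rw [slope_def_field, div_le_iff₀ (by linarith)] at this
    linarith

lemma aux_antitone (hconc : ConcaveOn ℝ Set.univ φ)
    (hder1 : ∀ s, HasDerivAt φ (φ' s) s) : Antitone φ' := by
  intro a b hab
  rcases eq_or_lt_of_le hab with rfl | h
  · exact le_refl _
  have h1 := aux_tangent_le hconc hder1 a b
  have h2 := aux_tangent_le hconc hder1 b a
  nlinarith

lemma aux_phi2_nonpos (hconc : ConcaveOn ℝ Set.univ φ)
    (hder1 : ∀ s, HasDerivAt φ (φ' s) s)
    (hder2 : ∀ s, HasDerivAt φ' (φ'' s) s) (s : ℝ) : φ'' s ≤ 0 := by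
  have hant := aux_antitone hconc hder1
  have tend : Filter.Tendsto (slope φ' s) (nhdsWithin s (Set.Iio s)) (nhds (φ'' s)) :=
    (hasDerivAt_iff_tendsto_slope.mp (hder2 s)).mono_left
      (nhdsWithin_mono s (fun w hw => ne_of_lt hw))
  refine le_of_tendsto tend ?_
  filter_upwards [self_mem_nhdsWithin] with w (hw : w < s)
  rw [slope_def_field]
  apply div_nonpos_of_nonneg_of_nonpos
  · have := hant hw.le; linarith
  · linarith

/-- Second order tangent estimate from below on the left, assuming `φ''` is
monotone on a set containing `Ioo t s`. -/
lemma aux_second_tangent (hder1 : ∀ s, HasDerivAt φ (φ' s) s)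
    (hder2 : ∀ s, HasDerivAt φ' (φ'' s) s) {M : Set ℝ} (hmono : MonotoneOn φ'' M)
    {t s : ℝ} (hts : t < s) (hsub : Set.Ioo t s ⊆ M) :
    φ t ≤ φ s + φ' s * (t - s) + φ'' s * (t - s) ^ 2 / 2 := by
  have contφ' : ∀ (a b : ℝ), ContinuousOn φ' (Set.Icc a b) :=
    fun a b => fun u _ => (hder2 u).continuousAt.continuousWithinAt
  -- Step 1: φ'' v ≤ φ'' s for v ∈ Ioo t s.
  have hA : ∀ v ∈ Set.Ioo t s, φ'' v ≤ φ'' s := by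
    intro v hv
    have tend : Filter.Tendsto (slope φ' s) (nhdsWithin s (Set.Iio s)) (nhds (φ'' s)) :=
      (hasDerivAt_iff_tendsto_slope.mp (hder2 s)).mono_left
        (nhdsWithin_mono s (fun w hw => ne_of_lt hw))
    refine ge_of_tendsto tend ?_
    filter_upwards [Ioo_mem_nhdsLT hv.2] with w hw
    obtain ⟨ξ, hξ, hξeq⟩ := exists_hasDerivAt_eq_slope φ' φ'' hw.2 (contφ' w s)
      (fun u _ => hder2 u)
    rw [slope_def_field]
    have hmle : φ'' v ≤ φ'' ξ := by
      refine hmono (hsub hv) (hsub ⟨lt_trans hv.1 (lt_trans hw.1 hξ.1), hξ.2⟩) ?_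
      linarith [hξ.1, hw.1]
    have : (φ' w - φ' s) / (w - s) = (φ' s - φ' w) / (s - w) := by
      rw [← neg_sub (φ' s), ← neg_sub s, neg_div_neg_eq]
    rw [this, ← hξeq]; exact hmle
  -- Step 2: derivative of the auxiliary function.
  set g : ℝ → ℝ := fun u => φ u - φ' s * (u - s) - φ'' s * (u - s) ^ 2 / 2 with hg
  have hg' : ∀ u, HasDerivAt g (φ' u - φ' s - φ'' s * (u - s)) u := by
    intro u
    have h1 : HasDerivAt (fun u : ℝ => u - s) 1 u := (hasDerivAt_id u).sub_const s
    have h2 : HasDerivAt (fun u : ℝ => (u - s) ^ 2) (2 * (u - s)) u := by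
      simpa using h1.fun_pow 2
    have h3 := h1.const_mul (φ' s)
    have h4 := (h2.const_mul (φ'' s)).div_const 2
    have := ((hder1 u).sub h3).sub h4
    exact this.congr_deriv (by ring)
  have hstep : ∀ u ∈ Set.Ioo t s, 0 ≤ φ' u - φ' s - φ'' s * (u - s) := by
    intro u hu
    obtain ⟨ξ, hξ, hξeq⟩ := exists_hasDerivAt_eq_slope φ' φ'' hu.2 (contφ' u s)
      (fun v _ => hder2 v)
    have hmle : φ'' ξ ≤ φ'' s := hA ξ ⟨lt_trans hu.1 hξ.1, hξ.2⟩
    rw [hξeq, div_le_iff₀ (by linarith [hu.2] : (0:ℝ) < s - u)] at hmle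
    nlinarith
  obtain ⟨ξ, hξ, hξeq⟩ := exists_hasDerivAt_eq_slope g _ hts
    (fun u _ => (hg' u).continuousAt.continuousWithinAt) (fun u _ => hg' u)
  have h0 : 0 ≤ (g s - g t) / (s - t) := by rw [← hξeq]; exact hstep ξ hξ
  rw [le_div_iff₀ (by linarith : (0:ℝ) < s - t)] at h0
  simp only [hg] at h0
  nlinarith [h0]

end Aux

/-- Chain rule estimate: if `φ` is concave and `φ''` is nondecreasing on the relevant
interval, then `Δ(φ∘f)(x) ≤ φ'(f(x)) Δf(x) + (P₀/2) φ''(f(x)) (∇₋f(x))²`. -/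
theorem local_chain_rule {V : Type*} [Fintype V] (P d : V → V → ℝ)
    (hP : ∀ x y, 0 ≤ P x y) (hsupp : ∀ x y, 0 < P x y ↔ 0 < P y x)
    (hd : IsPathDist P d)
    (φ φ' φ'' : ℝ → ℝ)
    (hconc : ConcaveOn ℝ Set.univ φ)
    (hder1 : ∀ s, HasDerivAt φ (φ' s) s)
    (hder2 : ∀ s, HasDerivAt φ' (φ'' s) s)
    (f : V → ℝ) (x : V)
    (hmono : MonotoneOn φ'' {s | (∃ y, (0 < P x y ∧ x ≠ y) ∧ f y < s) ∧ s < f x}) :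
    lap P (fun z => φ (f z)) x ≤
      φ' (f x) * lap P f x + P0 P d / 2 * φ'' (f x) * (nablaMinus P d f x) ^ 2 := by
  classical
  haveI : Nonempty V := ⟨x⟩
  have hφ'' : φ'' (f x) ≤ 0 := aux_phi2_nonpos hconc hder1 hder2 (f x)
  have hdpos : ∀ y : V, x ≠ y → 0 < d x y := fun y hy => hd.2.2.2.1 x y hy
  set M : Set ℝ := {s | (∃ y, (0 < P x y ∧ x ≠ y) ∧ f y < s) ∧ s < f x} with hM
  set cond : V → Prop := fun y => 0 < P x y ∧ x ≠ y ∧ f y < f x with hcond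
  set S : ℝ := ∑ y, if cond y then P x y * (φ'' (f x) * (f x - f y) ^ 2 / 2) else 0 with hS
  set v : V → ℝ := fun y => if 0 < P x y ∧ x ≠ y then max (f x - f y) 0 / d x y else 0 with hv
  have hNdef : nablaMinus P d f x = ⨆ y, v y := rfl
  have hvnn : ∀ y, 0 ≤ v y := by
    intro y
    simp only [hv]
    split_ifs with h
    · exact div_nonneg (le_max_right _ _) (hdpos y h.2).le
    · exact le_refl 0
  have h1 : lap P (fun z => φ (f z)) x ≤ φ' (f x) * lap P f x + S := by
    rw [lap, lap, Finset.mul_sum, hS, ← Finset.sum_add_distrib]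
    apply Finset.sum_le_sum
    intro y _
    by_cases hc : cond y
    · rw [if_pos hc]
      obtain ⟨hp, hne, hlt⟩ := hc
      have hsub : Set.Ioo (f y) (f x) ⊆ M := fun z hz => ⟨⟨y, ⟨hp, hne⟩, hz.1⟩, hz.2⟩
      have key := aux_second_tangent hder1 hder2 hmono hlt hsub
      have := mul_le_mul_of_nonneg_left key (hP x y)
      nlinarith [this]
    · rw [if_neg hc]
      have key := aux_tangent_le hconc hder1 (f x) (f y)
      have := mul_le_mul_of_nonneg_left (by linarith [key] : φ (f y) - φ (f x) ≤ φ' (f x) * (f y - f x)) (hP x y)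
      nlinarith [this]
  have h2 : S ≤ P0 P d / 2 * φ'' (f x) * (nablaMinus P d f x) ^ 2 := by
    by_cases hex : ∃ y, cond y
    · obtain ⟨y₁, hc₁⟩ := hex
      obtain ⟨ys, hys⟩ := Finite.exists_max v
      have hN : nablaMinus P d f x = v ys := by
        rw [hNdef]
        exact le_antisymm (ciSup_le hys) (le_ciSup (Set.Finite.bddAbove (Set.finite_range v)) ys)
      have hv₁ : 0 < v y₁ := by
        simp only [hv]
        simp only [if_pos (⟨hc₁.1, hc₁.2.1⟩ : 0 < P x y₁ ∧ x ≠ y₁)]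
        exact div_pos (lt_of_lt_of_le (by linarith [hc₁.2.2]) (le_max_left _ _)) (hdpos y₁ hc₁.2.1)
      have hvys : 0 < v ys := lt_of_lt_of_le hv₁ (hys y₁)
      have hcys : 0 < P x ys ∧ x ≠ ys := by
        by_contra h
        simp only [hv, if_neg h] at hvys; exact lt_irrefl 0 hvys
      have hlt : f ys < f x := by
        by_contra h
        simp only [hv, if_pos hcys,
          max_eq_right (by linarith [not_lt.mp h] : f x - f ys ≤ 0)] at hvys
        simp at hvys
      have hveq : v ys = (f x - f ys) / d x ys := by
        simp only [hv, if_pos hcys, max_eq_left (by linarith : (0:ℝ) ≤ f x - f ys)]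
      have hDpos : 0 < d x ys := hdpos ys hcys.2
      have hfd : f x - f ys = v ys * d x ys := by rw [hveq]; field_simp
      have hterm : S ≤ P x ys * (φ'' (f x) * (f x - f ys) ^ 2 / 2) := by
        rw [hS, ← Finset.sum_erase_add _ _ (Finset.mem_univ ys),
          if_pos (⟨hcys.1, hcys.2, hlt⟩ : cond ys)]
        have hle : (∑ y ∈ Finset.univ.erase ys,
            if cond y then P x y * (φ'' (f x) * (f x - f y) ^ 2 / 2) else 0) ≤ 0 := by
          apply Finset.sum_nonpos
          intro y _
          split_ifs with h
          · exact mul_nonpos_of_nonneg_of_nonpos (hP x y)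
              (by nlinarith [sq_nonneg (f x - f y)])
          · exact le_refl 0
        linarith
      have hP0le : P0 P d ≤ P x ys * d x ys ^ 2 := by
        apply csInf_le
        · exact ⟨0, fun c hc => by
            obtain ⟨a, b, hab, hpos, rfl⟩ := hc
            exact mul_nonneg hpos.le (sq_nonneg _)⟩
        · exact ⟨x, ys, hcys.2, hcys.1, rfl⟩
      have hc0 : φ'' (f x) * (v ys) ^ 2 / 2 ≤ 0 := by nlinarith [sq_nonneg (v ys)]
      have hmul := mul_le_mul_of_nonpos_right hP0le hc0
      rw [hfd] at hterm
      rw [hN]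
      nlinarith [hterm, hmul]
    · push_neg at hex
      have hS0 : S = 0 := by
        rw [hS]; exact Finset.sum_eq_zero fun y _ => if_neg (hex y)
      have hN0 : nablaMinus P d f x = 0 := by
        rw [hNdef]
        have : v = fun _ => 0 := by
          funext y
          simp only [hv]
          split_ifs with h
          · have : ¬ f y < f x := fun hlt => hex y ⟨h.1, h.2, hlt⟩
            rw [max_eq_right (by linarith [not_lt.mp this])]
            simp
          · rfl
        rw [this, ciSup_const]
      rw [hS0, hN0]
      simp
  linarith [h1, h2]
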